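/- Let K be an abstract simplicial complex on the vertex set [m] and let J = (j_1,…,j_m) be an m-tuple of positive integers. Then the polyhedral product (D^{j_1},S^{j_1−1};…;D^{j_m},S^{j_m−1})^K is homeomorphic to the real moment-angle complex (D^1,S^0)^{K(J)}. -/

import Mathlib

structure ASC (m : ℕ) where
  faces : Set (Finset (Fin m))
  empty_mem : ∅ ∈ faces
  down_closed : ∀ {σ τ : Finset (Fin m)}, σ ∈ faces → τ ⊆ σ → τ ∈ faces

variable {m : ℕ}

/-- `d(J) = ∑ j_i` -/
def dJ (J : Fin m → ℕ) : ℕ := ∑ i, J i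

/-- the block `B_i ⊆ [d(J)]` : positions `∑_{k<i} j_k ≤ r < ∑_{k≤i} j_k` (0-indexed). -/
def Bblk (J : Fin m → ℕ) (i : Fin m) : Finset (Fin (dJ J)) :=
  Finset.univ.filter fun r =>
    (∑ k ∈ Finset.Iio i, J k) ≤ (r : ℕ) ∧ (r : ℕ) < ∑ k ∈ Finset.Iic i, J k

/-- `τ` is a missing face of `K` : `τ ∉ K` but every proper subset of `τ` is a face. -/
def IsMissingFace (K : ASC m) (τ : Finset (Fin m)) : Prop :=
  τ ∉ K.faces ∧ ∀ s ⊂ τ, s ∈ K.faces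

/-- the faces of `K(J)`: subsets of `[d(J)]` containing no set `∪_{i∈τ} B_i`
for a missing face `τ` of `K`. -/
def KJfaces (K : ASC m) (J : Fin m → ℕ) : Set (Finset (Fin (dJ J))) :=
  {σ | ∀ τ : Finset (Fin m), IsMissingFace K τ → ¬ (τ.biUnion (Bblk J) ⊆ σ)}

open Classical in
/-- The real moment-angle complex `(D¹,S⁰)^F ⊆ [-1,1]^n`. -/
noncomputable def RMAC {n : ℕ} (F : Set (Finset (Fin n))) : Set (Fin n → ℝ) :=
  {x | (∀ i, |x i| ≤ 1) ∧ (Finset.univ.filter fun i => |x i| < 1) ∈ F}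

open Classical in
/-- The polyhedral product `(D^{j_1},S^{j_1-1};…;D^{j_m},S^{j_m-1})^K`, as the subspace of
`∏ D^{j_i}` of points `x` such that `{i : x_i ∈ D∖S}` is a face of `K`. -/
noncomputable def PolyProdDS (K : ASC m) (J : Fin m → ℕ) :
    Set (Π i : Fin m, EuclideanSpace ℝ (Fin (J i))) :=
  {x | (∀ i, ‖x i‖ ≤ 1) ∧ (Finset.univ.filter fun i => ‖x i‖ < 1) ∈ K.faces}

noncomputable section
open Classical

variable (j : ℕ)

/-- Euclidean ball to sup-norm ball, radially, norm-preserving. -/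
def toCube (x : EuclideanSpace ℝ (Fin j)) : Fin j → ℝ :=
  if x = 0 then 0 else
    (‖x‖ / ‖WithLp.equiv 2 (Fin j → ℝ) x‖) • WithLp.equiv 2 (Fin j → ℝ) x

def fromCube (y : Fin j → ℝ) : EuclideanSpace ℝ (Fin j) :=
  if y = 0 then 0 else
    (‖y‖ / ‖(WithLp.equiv 2 (Fin j → ℝ)).symm y‖) • (WithLp.equiv 2 (Fin j → ℝ)).symm y

variable {j}

lemma equiv_ne_zero {x : EuclideanSpace ℝ (Fin j)} (hx : x ≠ 0) :
    WithLp.equiv 2 (Fin j → ℝ) x ≠ 0 := fun h => hx (by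
  simpa using congrArg (WithLp.equiv 2 (Fin j → ℝ)).symm h)

lemma equiv_symm_ne_zero {y : Fin j → ℝ} (hy : y ≠ 0) :
    (WithLp.equiv 2 (Fin j → ℝ)).symm y ≠ 0 := fun h => hy (by
  simpa using congrArg (WithLp.equiv 2 (Fin j → ℝ)) h)

lemma norm_toCube (x : EuclideanSpace ℝ (Fin j)) : ‖toCube j x‖ = ‖x‖ := by
  unfold toCube
  split_ifs with h
  · simp [h]
  · rw [norm_smul, norm_div, norm_norm, norm_norm,
      div_mul_cancel₀ _ (norm_ne_zero_iff.2 (equiv_ne_zero h))]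

lemma norm_fromCube (y : Fin j → ℝ) : ‖fromCube j y‖ = ‖y‖ := by
  unfold fromCube
  split_ifs with h
  · simp [h]
  · rw [norm_smul, norm_div, norm_norm, norm_norm,
      div_mul_cancel₀ _ (norm_ne_zero_iff.2 (equiv_symm_ne_zero h))]

lemma toCube_ne_zero {x : EuclideanSpace ℝ (Fin j)} (hx : x ≠ 0) : toCube j x ≠ 0 := by
  rw [← norm_ne_zero_iff, norm_toCube]
  exact norm_ne_zero_iff.2 hx

lemma fromCube_ne_zero {y : Fin j → ℝ} (hy : y ≠ 0) : fromCube j y ≠ 0 := by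
  rw [← norm_ne_zero_iff, norm_fromCube]
  exact norm_ne_zero_iff.2 hy

lemma key {a b : ℝ} (ha : a ≠ 0) (hb : b ≠ 0) : a / (a / b * a) * (a / b) = 1 := by
  field_simp

lemma fromCube_toCube (x : EuclideanSpace ℝ (Fin j)) : fromCube j (toCube j x) = x := by
  by_cases h : x = 0
  · simp [h, toCube, fromCube]
  · rw [fromCube, if_neg (toCube_ne_zero h), norm_toCube]
    rw [toCube, if_neg h, show ∀ (c : ℝ) (v : Fin j → ℝ), (WithLp.equiv 2 (Fin j → ℝ)).symm (c • v) =
      c • (WithLp.equiv 2 (Fin j → ℝ)).symm v from fun _ _ => rfl, Equiv.symm_apply_apply]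
    have hv : ‖WithLp.equiv 2 (Fin j → ℝ) x‖ ≠ 0 := norm_ne_zero_iff.2 (equiv_ne_zero h)
    have hx : ‖x‖ ≠ 0 := norm_ne_zero_iff.2 h
    rw [norm_smul, smul_smul, Real.norm_eq_abs, abs_div, abs_norm, abs_norm,
      key hx hv, one_smul]

lemma toCube_fromCube (y : Fin j → ℝ) : toCube j (fromCube j y) = y := by
  by_cases h : y = 0
  · simp [h, toCube, fromCube]
  · rw [toCube, if_neg (fromCube_ne_zero h), norm_fromCube]
    rw [fromCube, if_neg h, show ∀ (c : ℝ) (v : EuclideanSpace ℝ (Fin j)), WithLp.equiv 2 (Fin j → ℝ) (c • v) =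
      c • WithLp.equiv 2 (Fin j → ℝ) v from fun _ _ => rfl, Equiv.apply_symm_apply]
    have hv : ‖(WithLp.equiv 2 (Fin j → ℝ)).symm y‖ ≠ 0 := norm_ne_zero_iff.2 (equiv_symm_ne_zero h)
    have hy : ‖y‖ ≠ 0 := norm_ne_zero_iff.2 h
    rw [norm_smul, smul_smul, Real.norm_eq_abs, abs_div, abs_norm, abs_norm,
      key hy hv, one_smul]

lemma continuous_toCube : Continuous (toCube j) := by
  rw [continuous_iff_continuousAt]
  intro x
  by_cases h : x = 0
  · subst h
    have h0 : toCube j (0 : EuclideanSpace ℝ (Fin j)) = 0 := by simp [toCube]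
    rw [ContinuousAt, h0]
    exact squeeze_zero_norm (fun y => (norm_toCube y).le) tendsto_norm_zero
  · have hopen : {y : EuclideanSpace ℝ (Fin j) | y ≠ 0} ∈ nhds x :=
      (isOpen_compl_singleton).mem_nhds h
    apply ContinuousAt.congr
    · exact (((continuous_norm.continuousAt).div
        ((PiLp.continuous_ofLp 2 _).norm.continuousAt)
        (norm_ne_zero_iff.2 (equiv_ne_zero h))).smul
        (PiLp.continuous_ofLp 2 _).continuousAt)
    · filter_upwards [hopen] with y hy
      rw [toCube, if_neg hy]; rfl

lemma continuous_fromCube : Continuous (fromCube j) := by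
  rw [continuous_iff_continuousAt]
  intro y
  by_cases h : y = 0
  · subst h
    have h0 : fromCube j (0 : Fin j → ℝ) = 0 := by simp [fromCube]
    rw [ContinuousAt, h0]
    exact squeeze_zero_norm (fun z => (norm_fromCube z).le) tendsto_norm_zero
  · have hopen : {z : Fin j → ℝ | z ≠ 0} ∈ nhds y :=
      (isOpen_compl_singleton).mem_nhds h
    apply ContinuousAt.congr
    · exact (((continuous_norm.continuousAt).div
        ((PiLp.continuous_toLp 2 _).norm.continuousAt)
        (norm_ne_zero_iff.2 (equiv_symm_ne_zero h))).smul
        (PiLp.continuous_toLp 2 _).continuousAt)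
    · filter_upwards [hopen] with z hz
      rw [fromCube, if_neg hz]; rfl

end

section Indexing

variable (J : Fin m → ℕ)

def off (i : Fin m) : ℕ := ∑ k ∈ Finset.Iio i, J k

lemma off_add (i : Fin m) : off J i + J i = ∑ k ∈ Finset.Iic i, J k := by
  rw [off, add_comm, ← Finset.sum_insert (by simp), Finset.Iio_insert]

lemma sum_Iic_le (i : Fin m) : ∑ k ∈ Finset.Iic i, J k ≤ dJ J :=
  Finset.sum_le_sum_of_subset (Finset.subset_univ _)

lemma off_mono {i i' : Fin m} (h : i < i') : off J i + J i ≤ off J i' := by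
  rw [off_add]
  exact Finset.sum_le_sum_of_subset (fun k hk => by
    simp only [Finset.mem_Iic] at hk
    simp only [off, Finset.mem_Iio]
    exact lt_of_le_of_lt hk h)

def idx (i : Fin m) (t : Fin (J i)) : Fin (dJ J) :=
  ⟨off J i + t, lt_of_lt_of_le (by have := t.isLt; omega) ((off_add J i) ▸ sum_Iic_le J i)⟩

lemma blkSet_nonempty (r : Fin (dJ J)) :
    (Finset.univ.filter fun i => off J i ≤ (r : ℕ)).Nonempty := by
  have hm : 0 < m := by
    rcases Nat.eq_zero_or_pos m with h | h
    · exfalso; have hr := r.isLt; subst h; simp [dJ] at hr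
    · exact h
  refine ⟨⟨0, hm⟩, ?_⟩
  have he : Finset.Iio (⟨0, hm⟩ : Fin m) = ∅ := by
    simp [Finset.eq_empty_iff_forall_notMem, Fin.lt_def]
  refine Finset.mem_filter.2 ⟨Finset.mem_univ _, ?_⟩
  show ∑ k ∈ Finset.Iio _, J k ≤ _
  rw [he, Finset.sum_empty]
  exact Nat.zero_le _

noncomputable def blk (r : Fin (dJ J)) : Fin m :=
  (Finset.univ.filter fun i => off J i ≤ (r : ℕ)).max' (blkSet_nonempty J r)

lemma blk_le (r : Fin (dJ J)) : off J (blk J r) ≤ (r : ℕ) := by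
  have := Finset.max'_mem (Finset.univ.filter fun i => off J i ≤ (r : ℕ)) (blkSet_nonempty J r)
  simpa [blk] using this

lemma lt_blk (r : Fin (dJ J)) : (r : ℕ) < off J (blk J r) + J (blk J r) := by
  by_contra h
  push_neg at h
  by_cases hi : ((blk J r : ℕ) + 1) < m
  · set i' : Fin m := ⟨(blk J r : ℕ) + 1, hi⟩ with hi'
    have h1 : off J i' = off J (blk J r) + J (blk J r) := by
      have hIio : Finset.Iio i' = Finset.Iic (blk J r) := by
        ext k
        simp only [Finset.mem_Iio, Finset.mem_Iic, Fin.lt_def, Fin.le_def, hi']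
        omega
      rw [off_add, off, hIio]
    have h2 : i' ∈ Finset.univ.filter fun i => off J i ≤ (r : ℕ) := by
      simp only [Finset.mem_filter, Finset.mem_univ, true_and, h1]
      omega
    have h3 : i' ≤ blk J r := Finset.le_max' _ i' h2
    rw [Fin.le_def] at h3
    simp only [hi'] at h3
    omega
  · have huniv : Finset.Iic (blk J r) = Finset.univ := by
      ext k
      simp only [Finset.mem_Iic, Finset.mem_univ, iff_true, Fin.le_def]
      have := k.isLt; omega
    have hle : dJ J ≤ (r : ℕ) := by
      show ∑ k, J k ≤ (r : ℕ)
      rw [← huniv, ← off_add]; exact h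
    exact absurd r.isLt (not_lt.2 hle)

lemma blk_unique {r : Fin (dJ J)} {i : Fin m}
    (h1 : off J i ≤ (r : ℕ)) (h2 : (r : ℕ) < off J i + J i) : blk J r = i := by
  rcases lt_trichotomy (blk J r) i with h | h | h
  · have := off_mono J h
    have := lt_blk J r
    omega
  · exact h
  · have := off_mono J h
    have := blk_le J r
    omega

lemma blk_idx (i : Fin m) (t : Fin (J i)) : blk J (idx J i t) = i := by
  apply blk_unique
  · show off J i ≤ off J i + (t : ℕ); omega
  · show off J i + (t : ℕ) < off J i + J i; have := t.isLt; omega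

noncomputable def pos (r : Fin (dJ J)) : Fin (J (blk J r)) :=
  ⟨(r : ℕ) - off J (blk J r), by have := blk_le J r; have := lt_blk J r; omega⟩

lemma idx_blk_pos (r : Fin (dJ J)) : idx J (blk J r) (pos J r) = r := by
  apply Fin.ext
  show off J (blk J r) + ((r : ℕ) - off J (blk J r)) = (r : ℕ)
  have := blk_le J r; omega

lemma pos_idx_val (i : Fin m) (t : Fin (J i)) : ((pos J (idx J i t)) : ℕ) = (t : ℕ) := by
  show ((idx J i t : ℕ)) - off J (blk J (idx J i t)) = (t : ℕ)
  rw [blk_idx]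
  show off J i + (t : ℕ) - off J i = (t : ℕ)
  omega

lemma mem_Bblk (r : Fin (dJ J)) (i : Fin m) : r ∈ Bblk J i ↔ blk J r = i := by
  rw [Bblk, Finset.mem_filter]
  simp only [Finset.mem_univ, true_and, ← off_add]
  constructor
  · rintro ⟨h1, h2⟩; exact blk_unique J h1 h2
  · rintro rfl; exact ⟨blk_le J r, lt_blk J r⟩

lemma apply_congr (f : ∀ i, Fin (J i) → ℝ) {i i' : Fin m} (h : i = i')
    {t : Fin (J i)} {t' : Fin (J i')} (ht : (t : ℕ) = (t' : ℕ)) : f i t = f i' t' := by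
  subst h
  rw [Fin.ext ht]

end Indexing

section Fwd

variable (J : Fin m → ℕ)

noncomputable def fwd (x : Π i : Fin m, EuclideanSpace ℝ (Fin (J i))) : Fin (dJ J) → ℝ :=
  fun r => toCube (J (blk J r)) (x (blk J r)) (pos J r)

noncomputable def bwd (y : Fin (dJ J) → ℝ) : Π i : Fin m, EuclideanSpace ℝ (Fin (J i)) :=
  fun i => fromCube (J i) (fun t => y (idx J i t))

lemma fwd_idx (x : Π i : Fin m, EuclideanSpace ℝ (Fin (J i))) (i : Fin m) (t : Fin (J i)) :
    fwd J x (idx J i t) = toCube (J i) (x i) t :=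
  apply_congr J (fun i' t' => toCube (J i') (x i') t') (blk_idx J i t) (pos_idx_val J i t)

lemma bwd_fwd (x : Π i : Fin m, EuclideanSpace ℝ (Fin (J i))) : bwd J (fwd J x) = x := by
  funext i
  show fromCube (J i) (fun t => fwd J x (idx J i t)) = x i
  have : (fun t => fwd J x (idx J i t)) = toCube (J i) (x i) := by
    funext t; exact fwd_idx J x i t
  rw [this, fromCube_toCube]

lemma fwd_bwd (y : Fin (dJ J) → ℝ) : fwd J (bwd J y) = y := by
  funext r
  show toCube (J (blk J r)) (fromCube (J (blk J r)) (fun t => y (idx J (blk J r) t))) (pos J r) = y r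
  rw [toCube_fromCube]
  exact congrArg y (idx_blk_pos J r)

lemma continuous_fwd : Continuous (fwd J) := by
  apply continuous_pi
  intro r
  exact (continuous_apply (pos J r)).comp
    ((continuous_toCube).comp (continuous_apply (blk J r)))

lemma continuous_bwd : Continuous (bwd J) := by
  apply continuous_pi
  intro i
  exact (continuous_fromCube).comp (continuous_pi fun t => continuous_apply (idx J i t))

end Fwd

lemma exists_missing (K : ASC m) (T : Finset (Fin m)) (hT : T ∉ K.faces) :
    ∃ τ, IsMissingFace K τ ∧ τ ⊆ T := by
  induction T using Finset.strongInduction with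
  | _ T ih =>
    by_cases h : ∀ s ⊂ T, s ∈ K.faces
    · exact ⟨T, ⟨hT, h⟩, subset_rfl⟩
    · push_neg at h
      obtain ⟨s, hs, hs'⟩ := h
      obtain ⟨τ, hτ, hsub⟩ := ih s hs hs'
      exact ⟨τ, hτ, hsub.trans hs.subset⟩

lemma face_iff (K : ASC m) (T : Finset (Fin m)) :
    T ∈ K.faces ↔ ∀ τ, IsMissingFace K τ → ¬ τ ⊆ T := by
  constructor
  · intro hT τ hτ hsub
    exact hτ.1 (K.down_closed hT hsub)
  · intro h
    by_contra hT
    obtain ⟨τ, hτ, hsub⟩ := exists_missing K T hT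
    exact h τ hτ hsub

lemma mem_key (K : ASC m) (J : Fin m → ℕ) (x : Π i : Fin m, EuclideanSpace ℝ (Fin (J i))) :
    x ∈ PolyProdDS K J ↔ fwd J x ∈ RMAC (KJfaces K J) := by
  classical
  set y := fwd J x with hy
  have hA : (∀ i, ‖x i‖ ≤ 1) ↔ (∀ r, |y r| ≤ 1) := by
    constructor
    · intro h r
      calc |y r| = ‖toCube (J (blk J r)) (x (blk J r)) (pos J r)‖ := (Real.norm_eq_abs _).symm
        _ ≤ ‖toCube (J (blk J r)) (x (blk J r))‖ := norm_le_pi_norm _ _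
        _ = ‖x (blk J r)‖ := norm_toCube _
        _ ≤ 1 := h _
    · intro h i
      rw [← norm_toCube (x i), pi_norm_le_iff_of_nonneg zero_le_one]
      intro t
      rw [Real.norm_eq_abs, ← fwd_idx J x i t]
      exact h _
  have hB : ∀ i, ((Bblk J i ⊆ Finset.univ.filter fun r => |y r| < 1) ↔ ‖x i‖ < 1) := by
    intro i
    constructor
    · intro hsub
      rw [← norm_toCube (x i), pi_norm_lt_iff zero_lt_one]
      intro t
      have h1 : idx J i t ∈ Bblk J i := (mem_Bblk J _ i).2 (blk_idx J i t)
      have h2 := hsub h1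
      rw [Finset.mem_filter] at h2
      rw [Real.norm_eq_abs, ← fwd_idx J x i t]
      exact h2.2
    · intro hlt r hr
      rw [mem_Bblk] at hr
      rw [Finset.mem_filter]
      refine ⟨Finset.mem_univ _, ?_⟩
      have h1 : y r = toCube (J i) (x i) ⟨(pos J r : ℕ), hr ▸ (pos J r).isLt⟩ :=
        apply_congr J (fun i' t' => toCube (J i') (x i') t') hr rfl
      rw [h1]
      calc |toCube (J i) (x i) ⟨(pos J r : ℕ), hr ▸ (pos J r).isLt⟩|
          = ‖toCube (J i) (x i) ⟨(pos J r : ℕ), hr ▸ (pos J r).isLt⟩‖ := (Real.norm_eq_abs _).symm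
        _ ≤ ‖toCube (J i) (x i)‖ := norm_le_pi_norm _ _
        _ = ‖x i‖ := norm_toCube _
        _ < 1 := hlt
  have hTS : ∀ τ : Finset (Fin m),
      (τ.biUnion (Bblk J) ⊆ Finset.univ.filter fun r => |y r| < 1) ↔
        τ ⊆ Finset.univ.filter fun i => ‖x i‖ < 1 := by
    intro τ
    rw [Finset.biUnion_subset]
    constructor
    · intro h i hi
      rw [Finset.mem_filter]
      exact ⟨Finset.mem_univ _, (hB i).1 (h i hi)⟩
    · intro h i hi
      have := h hi
      rw [Finset.mem_filter] at this
      exact (hB i).2 this.2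
  constructor
  · rintro ⟨h1, h2⟩
    refine ⟨hA.1 h1, ?_⟩
    intro τ hτ hsub
    rw [show (Finset.univ.filter fun r => |y r| < 1) =
      (Finset.univ.filter fun r => |fwd J x r| < 1) from rfl] at *
    have h3 := (hTS τ).1 (by convert hsub using 2)
    exact ((face_iff K _).1 (by convert h2 using 2) τ hτ) h3
  · rintro ⟨h1, h2⟩
    refine ⟨hA.2 h1, ?_⟩
    rw [face_iff]
    intro τ hτ hsub
    exact (by convert h2 τ hτ using 2 : ¬ _) ((hTS τ).2 (by convert hsub using 2))

theorem stmt0 (K : ASC m) (J : Fin m → ℕ) (hJ : ∀ i, 1 ≤ J i) :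
    Nonempty (↥(PolyProdDS K J) ≃ₜ ↥(RMAC (KJfaces K J))) := by
  refine ⟨{
    toEquiv := Equiv.subtypeEquiv ⟨fwd J, bwd J, bwd_fwd J, fwd_bwd J⟩ (mem_key K J)
    continuous_toFun := ((continuous_fwd J).comp continuous_subtype_val).subtype_mk _
    continuous_invFun := ((continuous_bwd J).comp continuous_subtype_val).subtype_mk _ }⟩
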